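/- Let H be a real Hilbert space, B a topological space, and A : B → B(H) a map, continuous for the operator-norm topology, such that each A_x is a skew-adjoint Fredholm operator (A_x* = −A_x) and x ↦ dim ker(A_x) is locally constant; let p_x denote the orthogonal projection of H onto ker(A_x). Suppose there is a map J : B → B(H), continuous for the operator-norm topology, such that each J_x is skew-adjoint, commutes with p_x, and satisfies J_x² u = −u for all u ∈ ker(A_x). Then for every real t ≠ 0 and every x ∈ B the operator A_x + t·J_x p_x is an invertible skew-adjoint operator, and the straight-line homotopy (s, x) ↦ A_x + s·t·J_x p_x, s ∈ [0,1], is a homotopy through skew-adjoint Fredholm operators from A to a family consisting of invertible operators. -/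

import Mathlib

/-- A bounded operator on a real Hilbert space is Fredholm if its kernel is
finite-dimensional and its range is closed and of finite codimension. -/
def IsFredholm {H : Type*} [NormedAddCommGroup H] [InnerProductSpace ℝ H]
    (T : H →L[ℝ] H) : Prop :=
  FiniteDimensional ℝ (LinearMap.ker (T : H →ₗ[ℝ] H)) ∧ IsClosed (LinearMap.range (T : H →ₗ[ℝ] H) : Set H) ∧
    FiniteDimensional ℝ (H ⧸ LinearMap.range (T : H →ₗ[ℝ] H))

open Classical in
/-- The orthogonal projection of `H` onto the kernel of `T`, as a bounded operator
`H →L[ℝ] H` (defined to be `0` if the kernel is not finite-dimensional). -/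
noncomputable def kerProjection {H : Type*} [NormedAddCommGroup H] [InnerProductSpace ℝ H]
    (T : H →L[ℝ] H) : H →L[ℝ] H :=
  if h : FiniteDimensional ℝ (LinearMap.ker (T : H →ₗ[ℝ] H)) then
    haveI := h
    (LinearMap.ker (T : H →ₗ[ℝ] H)).subtypeL.comp (LinearMap.ker (T : H →ₗ[ℝ] H)).orthogonalProjectionOnto
  else 0

open ContinuousLinearMap Submodule Module
open scoped RealInnerProductSpace
set_option linter.unusedSectionVars false
set_option linter.unusedVariables false
set_option linter.unnecessarySimpa false
set_option maxHeartbeats 1000000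

section Stmt12Aux

variable {H : Type*} [NormedAddCommGroup H] [InnerProductSpace ℝ H] [CompleteSpace H]

lemma kerProjection_def (T : H →L[ℝ] H) [h : FiniteDimensional ℝ (LinearMap.ker (T : H →ₗ[ℝ] H))] :
    kerProjection T
      = (LinearMap.ker (T : H →ₗ[ℝ] H)).subtypeL.comp ((LinearMap.ker (T : H →ₗ[ℝ] H)).orthogonalProjectionOnto) := by
  unfold kerProjection
  rw [dif_pos h]

lemma kerProjection_apply (T : H →L[ℝ] H) [h : FiniteDimensional ℝ (LinearMap.ker (T : H →ₗ[ℝ] H))] (u : H) :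
    kerProjection T u = ((LinearMap.ker (T : H →ₗ[ℝ] H)).orthogonalProjectionOnto u : H) := by
  rw [kerProjection_def]; rfl

lemma kerProjection_mem (T : H →L[ℝ] H) [h : FiniteDimensional ℝ (LinearMap.ker (T : H →ₗ[ℝ] H))] (u : H) :
    kerProjection T u ∈ LinearMap.ker (T : H →ₗ[ℝ] H) := by
  rw [kerProjection_apply]; exact ((LinearMap.ker (T : H →ₗ[ℝ] H)).orthogonalProjectionOnto u).2

lemma kerProjection_of_mem (T : H →L[ℝ] H) [h : FiniteDimensional ℝ (LinearMap.ker (T : H →ₗ[ℝ] H))]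
    {u : H} (hu : u ∈ LinearMap.ker (T : H →ₗ[ℝ] H)) : kerProjection T u = u := by
  rw [kerProjection_apply]; exact Submodule.starProjection_eq_self_iff.2 hu

lemma kerProjection_sub_mem (T : H →L[ℝ] H) [h : FiniteDimensional ℝ (LinearMap.ker (T : H →ₗ[ℝ] H))] (u : H) :
    u - kerProjection T u ∈ (LinearMap.ker (T : H →ₗ[ℝ] H))ᗮ := by
  rw [kerProjection_apply]; exact Submodule.sub_starProjection_mem_orthogonal u

lemma kerProjection_adjoint (T : H →L[ℝ] H) [h : FiniteDimensional ℝ (LinearMap.ker (T : H →ₗ[ℝ] H))] :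
    ContinuousLinearMap.adjoint (kerProjection T) = kerProjection T := by
  rw [kerProjection_def]
  exact (isSelfAdjoint_starProjection (LinearMap.ker (T : H →ₗ[ℝ] H))).adjoint_eq

lemma kerProjection_of_mem_orthogonal (T : H →L[ℝ] H) [h : FiniteDimensional ℝ (LinearMap.ker (T : H →ₗ[ℝ] H))]
    {u : H} (hu : u ∈ (LinearMap.ker (T : H →ₗ[ℝ] H))ᗮ) : kerProjection T u = 0 := by
  rw [kerProjection_apply]
  rw [Submodule.orthogonalProjectionOnto_apply_of_mem_orthogonal hu]
  simp

-- T (p u) = 0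
lemma T_kerProjection (T : H →L[ℝ] H) [h : FiniteDimensional ℝ (LinearMap.ker (T : H →ₗ[ℝ] H))] (u : H) :
    T (kerProjection T u) = 0 :=
  kerProjection_mem T u

-- p (T u) = 0 for skew T
lemma kerProjection_T (T : H →L[ℝ] H) [h : FiniteDimensional ℝ (LinearMap.ker (T : H →ₗ[ℝ] H))]
    (hT : ContinuousLinearMap.adjoint T = -T) (u : H) :
    kerProjection T (T u) = 0 := by
  apply kerProjection_of_mem_orthogonal
  rw [Submodule.mem_orthogonal]
  intro v hv
  have h0 : T v = 0 := LinearMap.mem_ker.mp hv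
  have h2 : ⟪(ContinuousLinearMap.adjoint T) v, u⟫ = ⟪v, T u⟫ :=
    ContinuousLinearMap.adjoint_inner_left T u v
  rw [hT, ContinuousLinearMap.neg_apply, h0] at h2
  have h3 : ⟪v, T u⟫ = 0 := by simpa using h2.symm
  exact h3

-- range T = (ker T)ᗮ
lemma range_eq_ker_orthogonal (T : H →L[ℝ] H)
    (hT : ContinuousLinearMap.adjoint T = -T)
    (hcl : IsClosed (LinearMap.range (T : H →ₗ[ℝ] H) : Set H)) :
    LinearMap.range (T : H →ₗ[ℝ] H) = (LinearMap.ker (T : H →ₗ[ℝ] H))ᗮ := by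
  have h1 : (LinearMap.range (T : H →ₗ[ℝ] H))ᗮ = LinearMap.ker (T : H →ₗ[ℝ] H) := by
    ext v
    rw [Submodule.mem_orthogonal, LinearMap.mem_ker, ContinuousLinearMap.coe_coe]
    constructor
    · intro hv
      have h2 : ⟪v, (ContinuousLinearMap.adjoint T) (T v)⟫ = ⟪T v, T v⟫ :=
        ContinuousLinearMap.adjoint_inner_right T v (T v)
      rw [hT, ContinuousLinearMap.neg_apply] at h2
      have h3 : ⟪T (T v), v⟫ = 0 := hv (T (T v)) ⟨T v, rfl⟩
      rw [← inner_self_eq_zero (𝕜 := ℝ), ← h2, inner_neg_right,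
        real_inner_comm, h3, neg_zero]
    · intro hv u hu
      obtain ⟨w, rfl⟩ := hu
      have h2 : ⟪(ContinuousLinearMap.adjoint T) v, w⟫ = ⟪v, T w⟫ :=
        ContinuousLinearMap.adjoint_inner_left T w v
      rw [hT, ContinuousLinearMap.neg_apply, hv] at h2
      have h3 : ⟪v, T w⟫ = 0 := by simpa using h2.symm
      rw [real_inner_comm]
      exact h3
  haveI : CompleteSpace (LinearMap.range (T : H →ₗ[ℝ] H)) := hcl.completeSpace_coe
  calc LinearMap.range (T : H →ₗ[ℝ] H) = ((LinearMap.range (T : H →ₗ[ℝ] H))ᗮ)ᗮ :=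
        (Submodule.orthogonal_orthogonal _).symm
    _ = (LinearMap.ker (T : H →ₗ[ℝ] H))ᗮ := by rw [h1]

-- J preserves the kernel
lemma J_ker (T J : H →L[ℝ] H) [h : FiniteDimensional ℝ (LinearMap.ker (T : H →ₗ[ℝ] H))]
    (hcomm : Commute J (kerProjection T)) {u : H} (hu : u ∈ LinearMap.ker (T : H →ₗ[ℝ] H)) :
    J u ∈ LinearMap.ker (T : H →ₗ[ℝ] H) := by
  have h1 : J (kerProjection T u) = kerProjection T (J u) := by
    have := congrArg (fun S : H →L[ℝ] H => S u) hcomm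
    simpa [ContinuousLinearMap.mul_apply] using this
  rw [kerProjection_of_mem T hu] at h1
  rw [h1]
  exact kerProjection_mem T (J u)

-- skew-adjointness of the deformed operator
lemma skew_sum (T J : H →L[ℝ] H) [h : FiniteDimensional ℝ (LinearMap.ker (T : H →ₗ[ℝ] H))]
    (hT : ContinuousLinearMap.adjoint T = -T)
    (hJ : ContinuousLinearMap.adjoint J = -J)
    (hcomm : Commute J (kerProjection T)) (c : ℝ) :
    ContinuousLinearMap.adjoint (T + c • (J * kerProjection T))
      = -(T + c • (J * kerProjection T)) := by
  have hstar : ∀ S : H →L[ℝ] H, star S = ContinuousLinearMap.adjoint S := fun S =>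
    ContinuousLinearMap.star_eq_adjoint S
  rw [← hstar, star_add, star_smul, star_mul, hstar, hstar, hstar,
    kerProjection_adjoint, hT, hJ]
  rw [mul_neg, ← hcomm.eq]
  simp only [star_trivial]
  module

lemma sum_injective (T J : H →L[ℝ] H) [h : FiniteDimensional ℝ (LinearMap.ker (T : H →ₗ[ℝ] H))]
    (hT : ContinuousLinearMap.adjoint T = -T)
    (hcomm : Commute J (kerProjection T))
    (hsq : ∀ u ∈ LinearMap.ker (T : H →ₗ[ℝ] H), J (J u) = -u)
    (c : ℝ) (hc : c ≠ 0) :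
    Function.Injective (T + c • (J * kerProjection T)) := by
  set p := kerProjection T with hp
  rw [injective_iff_map_eq_zero]
  intro u hu
  simp only [ContinuousLinearMap.add_apply, ContinuousLinearMap.smul_apply,
    ContinuousLinearMap.mul_apply] at hu
  -- apply p to hu
  have hcommpt : ∀ w, J (p w) = p (J w) := by
    intro w
    have := congrArg (fun S : H →L[ℝ] H => S w) hcomm
    simpa [ContinuousLinearMap.mul_apply] using this
  have h1 : p (T u) + c • p (J (p u)) = 0 := by
    have := congrArg p hu
    simpa [map_add, map_smul] using this
  rw [kerProjection_T T hT] at h1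
  have h2 : p (J (p u)) = J (p u) := by
    rw [← hcommpt, kerProjection_of_mem T (kerProjection_mem T u)]
  rw [h2, zero_add, smul_eq_zero] at h1
  have h3 : J (p u) = 0 := h1.resolve_left hc
  have h4 : p u = 0 := by
    have := hsq (p u) (kerProjection_mem T u)
    rw [h3, map_zero] at this
    exact (neg_eq_zero.mp this.symm)
  have h5 : T u = 0 := by
    rw [h4, map_zero, smul_zero, add_zero] at hu
    exact hu
  have h6 : p u = u := kerProjection_of_mem T h5
  rw [← h6, h4]

lemma sum_surjective (T J : H →L[ℝ] H) [h : FiniteDimensional ℝ (LinearMap.ker (T : H →ₗ[ℝ] H))]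
    (hT : ContinuousLinearMap.adjoint T = -T)
    (hcl : IsClosed (LinearMap.range (T : H →ₗ[ℝ] H) : Set H))
    (hcomm : Commute J (kerProjection T))
    (hsq : ∀ u ∈ LinearMap.ker (T : H →ₗ[ℝ] H), J (J u) = -u)
    (c : ℝ) (hc : c ≠ 0) :
    Function.Surjective (T + c • (J * kerProjection T)) := by
  set p := kerProjection T with hp
  have hcommpt : ∀ w, J (p w) = p (J w) := by
    intro w
    have := congrArg (fun S : H →L[ℝ] H => S w) hcomm
    simpa [ContinuousLinearMap.mul_apply] using this
  intro w
  have hpw : p w ∈ LinearMap.ker (T : H →ₗ[ℝ] H) := kerProjection_mem T w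
  -- u₁ solves the kernel part
  set u₁ : H := -(c⁻¹) • J (p w) with hu₁
  have hu₁ker : u₁ ∈ LinearMap.ker (T : H →ₗ[ℝ] H) := by
    apply Submodule.smul_mem
    exact J_ker T J hcomm hpw
  -- u₂ solves the range part
  have hwsub : w - p w ∈ LinearMap.range (T : H →ₗ[ℝ] H) := by
    rw [range_eq_ker_orthogonal T hT hcl]
    exact kerProjection_sub_mem T w
  obtain ⟨z, hz⟩ := hwsub
  refine ⟨u₁ + (z - p z), ?_⟩
  simp only [ContinuousLinearMap.add_apply, ContinuousLinearMap.smul_apply,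
    ContinuousLinearMap.mul_apply, map_add, map_sub]
  have hTu₁ : T u₁ = 0 := hu₁ker
  have hTpz : T (p z) = 0 := kerProjection_mem T z
  have hppz : p (p z) = p z := kerProjection_of_mem T (kerProjection_mem T z)
  have hpu₁ : p u₁ = u₁ := kerProjection_of_mem T hu₁ker
  rw [hTu₁, hTpz, hpu₁, hppz, show T z = w - p w from hz]
  have hJJ : J (J (p w)) = -(p w) := hsq (p w) hpw
  rw [hu₁, map_smul, hJJ, smul_smul, mul_neg, mul_inv_cancel₀ hc, neg_smul, one_smul, neg_neg]
  abel

lemma sum_isUnit (T J : H →L[ℝ] H) [h : FiniteDimensional ℝ (LinearMap.ker (T : H →ₗ[ℝ] H))]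
    (hT : ContinuousLinearMap.adjoint T = -T)
    (hcl : IsClosed (LinearMap.range (T : H →ₗ[ℝ] H) : Set H))
    (hcomm : Commute J (kerProjection T))
    (hsq : ∀ u ∈ LinearMap.ker (T : H →ₗ[ℝ] H), J (J u) = -u)
    (c : ℝ) (hc : c ≠ 0) :
    IsUnit (T + c • (J * kerProjection T)) := by
  set S := T + c • (J * kerProjection T) with hS
  have hinj : LinearMap.ker (S : H →ₗ[ℝ] H) = ⊥ :=
    LinearMap.ker_eq_bot.mpr (sum_injective T J hT hcomm hsq c hc)
  have hsurj : LinearMap.range (S : H →ₗ[ℝ] H) = ⊤ :=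
    LinearMap.range_eq_top.mpr (sum_surjective T J hT hcl hcomm hsq c hc)
  set e := ContinuousLinearEquiv.ofBijective S hinj hsurj with he
  refine ⟨⟨S, (e.symm : H →L[ℝ] H), ?_, ?_⟩, rfl⟩
  · ext u
    have h1 : S ((e.symm : H →L[ℝ] H) u) = e (e.symm u) := by
      rw [← ContinuousLinearEquiv.coeFn_ofBijective S hinj hsurj]
      rfl
    simp only [ContinuousLinearMap.mul_apply, ContinuousLinearMap.one_apply]
    rw [h1, ContinuousLinearEquiv.apply_symm_apply]
  · ext u
    have h1 : S u = e u := by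
      rw [← ContinuousLinearEquiv.coeFn_ofBijective S hinj hsurj]
    simp only [ContinuousLinearMap.mul_apply, ContinuousLinearMap.one_apply]
    rw [h1]
    exact e.symm_apply_apply u


lemma fredholm_of_bijective (S : H →L[ℝ] H) (hinj : Function.Injective S)
    (hsurj : Function.Surjective S) : _root_.IsFredholm S := by
  have h1 : LinearMap.ker (S : H →ₗ[ℝ] H) = ⊥ := LinearMap.ker_eq_bot.mpr hinj
  have h2 : LinearMap.range (S : H →ₗ[ℝ] H) = ⊤ := LinearMap.range_eq_top.mpr hsurj
  refine ⟨?_, ?_, ?_⟩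
  · rw [h1]; infer_instance
  · rw [h2]; simpa using isClosed_univ
  · have hsub : Subsingleton (H ⧸ LinearMap.range (S : H →ₗ[ℝ] H)) := by
      rw [h2]
      exact Submodule.Quotient.subsingleton_iff.mpr rfl
    exact Module.Finite.of_surjective (0 : (⊥ : Submodule ℝ H) →ₗ[ℝ] _)
      (fun y => ⟨0, (Subsingleton.elim _ y)⟩)

lemma sum_fredholm (T J : H →L[ℝ] H)
    (hT : ContinuousLinearMap.adjoint T = -T)
    (hfred : _root_.IsFredholm T)
    (hcomm : Commute J (kerProjection T))
    (hsq : ∀ u ∈ LinearMap.ker (T : H →ₗ[ℝ] H), J (J u) = -u)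
    (c : ℝ) :
    _root_.IsFredholm (T + c • (J * kerProjection T)) := by
  haveI := hfred.1
  rcases eq_or_ne c 0 with rfl | hc
  · simpa using hfred
  · exact fredholm_of_bijective _ (sum_injective T J hT hcomm hsq c hc)
      (sum_surjective T J hT hfred.2.1 hcomm hsq c hc)

lemma lower_bound (T : H →L[ℝ] H)
    (hT : ContinuousLinearMap.adjoint T = -T)
    [h : FiniteDimensional ℝ (LinearMap.ker (T : H →ₗ[ℝ] H))]
    (hcl : IsClosed (LinearMap.range (T : H →ₗ[ℝ] H) : Set H)) :
    ∃ c > 0, ∀ v ∈ (LinearMap.ker (T : H →ₗ[ℝ] H))ᗮ, c * ‖v‖ ≤ ‖T v‖ := by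
  set K := LinearMap.ker (T : H →ₗ[ℝ] H) with hK
  haveI : CompleteSpace (LinearMap.range (T : H →ₗ[ℝ] H)) := hcl.completeSpace_coe
  -- the restriction of T to Kᗮ, as a map into range T
  have hmem : ∀ v : Kᗮ, T v ∈ LinearMap.range (T : H →ₗ[ℝ] H) := fun v => ⟨v, rfl⟩
  set f : Kᗮ →L[ℝ] LinearMap.range (T : H →ₗ[ℝ] H) :=
    (T.comp (Kᗮ.subtypeL)).codRestrict (LinearMap.range (T : H →ₗ[ℝ] H)) hmem with hf
  have hfinj : LinearMap.ker (f : Kᗮ →ₗ[ℝ] LinearMap.range (T : H →ₗ[ℝ] H)) = ⊥ := by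
    apply LinearMap.ker_eq_bot.mpr
    intro v w hvw
    have h1 : T v = T w := congrArg Subtype.val hvw
    have h2 : (v : H) - w ∈ K := by
      rw [LinearMap.mem_ker, ContinuousLinearMap.coe_coe, map_sub, h1, sub_self]
    have h3 : (v : H) - w ∈ Kᗮ := Kᗮ.sub_mem v.2 w.2
    have h4 : (v : H) - w = 0 := by
      have := Submodule.inner_right_of_mem_orthogonal h2 h3
      rwa [inner_self_eq_zero (𝕜 := ℝ)] at this
    exact Subtype.ext (by rwa [sub_eq_zero] at h4)
  have hfsurj : LinearMap.range (f : Kᗮ →ₗ[ℝ] LinearMap.range (T : H →ₗ[ℝ] H)) = ⊤ := by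
    apply LinearMap.range_eq_top.mpr
    rintro ⟨w, u, rfl⟩
    refine ⟨⟨u - kerProjection T u, kerProjection_sub_mem T u⟩, ?_⟩
    apply Subtype.ext
    show T (u - kerProjection T u) = T u
    rw [map_sub, (show T (kerProjection T u) = 0 from kerProjection_mem T u), sub_zero]
  set e := ContinuousLinearEquiv.ofBijective f hfinj hfsurj with he
  refine ⟨(‖(e.symm : LinearMap.range (T : H →ₗ[ℝ] H) →L[ℝ] Kᗮ)‖ + 1)⁻¹, by positivity, ?_⟩
  intro v hv
  set C := ‖(e.symm : LinearMap.range (T : H →ₗ[ℝ] H) →L[ℝ] Kᗮ)‖ with hC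
  have hC0 : 0 ≤ C := norm_nonneg _
  have h1 : ‖v‖ ≤ C * ‖T v‖ := by
    have h2 : (⟨v, hv⟩ : Kᗮ) = e.symm (e ⟨v, hv⟩) := (e.symm_apply_apply _).symm
    have h3 : ‖e.symm (e ⟨v, hv⟩)‖ ≤ C * ‖e ⟨v, hv⟩‖ :=
      (e.symm : LinearMap.range (T : H →ₗ[ℝ] H) →L[ℝ] Kᗮ).le_opNorm _
    have h4 : ‖e (⟨v, hv⟩ : Kᗮ)‖ = ‖T v‖ := by
      rw [he, ContinuousLinearEquiv.coeFn_ofBijective]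
      rfl
    calc ‖v‖ = ‖(⟨v, hv⟩ : Kᗮ)‖ := rfl
      _ = ‖e.symm (e ⟨v, hv⟩)‖ := by rw [← h2]
      _ ≤ C * ‖e ⟨v, hv⟩‖ := h3
      _ = C * ‖T v‖ := by rw [h4]
  have h5 : ‖v‖ ≤ (C + 1) * ‖T v‖ := by nlinarith [norm_nonneg (T v)]
  rw [inv_mul_le_iff₀ (by positivity)]
  linarith

lemma kerProjection_pyth (T : H →L[ℝ] H) [h : FiniteDimensional ℝ (LinearMap.ker (T : H →ₗ[ℝ] H))] (v : H) :
    ‖v‖ ^ 2 = ‖kerProjection T v‖ ^ 2 + ‖v - kerProjection T v‖ ^ 2 := by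
  have hab : ⟪kerProjection T v, v - kerProjection T v⟫ = 0 :=
    Submodule.inner_right_of_mem_orthogonal (kerProjection_mem T v)
      (kerProjection_sub_mem T v)
  have h1 := norm_add_sq_real (kerProjection T v) (v - kerProjection T v)
  rw [hab] at h1
  simpa using h1

lemma kerProjection_norm_le (T : H →L[ℝ] H) [h : FiniteDimensional ℝ (LinearMap.ker (T : H →ₗ[ℝ] H))] (v : H) :
    ‖kerProjection T v‖ ≤ ‖v‖ := by
  have := kerProjection_pyth T v
  nlinarith [norm_nonneg (kerProjection T v), norm_nonneg v,
    sq_nonneg ‖v - kerProjection T v‖]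

lemma proj_dist (T₀ T₁ : H →L[ℝ] H)
    [h₀ : FiniteDimensional ℝ (LinearMap.ker (T₀ : H →ₗ[ℝ] H))]
    [h₁ : FiniteDimensional ℝ (LinearMap.ker (T₁ : H →ₗ[ℝ] H))]
    (hrk : finrank ℝ (LinearMap.ker (T₁ : H →ₗ[ℝ] H)) = finrank ℝ (LinearMap.ker (T₀ : H →ₗ[ℝ] H)))
    {c δ : ℝ} (hc : 0 < c)
    (hlb : ∀ v ∈ (LinearMap.ker (T₀ : H →ₗ[ℝ] H))ᗮ, c * ‖v‖ ≤ ‖T₀ v‖)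
    (hδ : ‖T₁ - T₀‖ ≤ δ) (hsmall : δ ≤ c / 2) :
    ‖kerProjection T₁ - kerProjection T₀‖ ≤ 3 * (δ / c) := by
  set P₀ := kerProjection T₀ with hP₀
  set P₁ := kerProjection T₁ with hP₁
  set r := δ / c with hr
  have hδ0 : 0 ≤ δ := le_trans (norm_nonneg _) hδ
  have hr0 : 0 ≤ r := div_nonneg hδ0 hc.le
  have hr2 : r ≤ 1 / 2 := by
    rw [hr, div_le_div_iff₀ hc (by norm_num)]
    linarith
  -- Step 1
  have step1 : ∀ v ∈ LinearMap.ker (T₁ : H →ₗ[ℝ] H), ‖v - P₀ v‖ ≤ r * ‖v‖ := by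
    intro v hv
    have hm : v - P₀ v ∈ (LinearMap.ker (T₀ : H →ₗ[ℝ] H))ᗮ := kerProjection_sub_mem T₀ v
    have h1 : c * ‖v - P₀ v‖ ≤ ‖T₀ (v - P₀ v)‖ := hlb _ hm
    have h2 : T₀ (v - P₀ v) = T₀ v := by
      rw [map_sub, (show T₀ (P₀ v) = 0 from kerProjection_mem T₀ v), sub_zero]
    have h3 : T₀ v = (T₀ - T₁) v := by
      rw [ContinuousLinearMap.sub_apply, (show T₁ v = 0 from hv), sub_zero]
    have h4 : ‖(T₀ - T₁) v‖ ≤ δ * ‖v‖ := by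
      calc ‖(T₀ - T₁) v‖ ≤ ‖T₀ - T₁‖ * ‖v‖ := (T₀ - T₁).le_opNorm v
        _ = ‖T₁ - T₀‖ * ‖v‖ := by rw [norm_sub_rev]
        _ ≤ δ * ‖v‖ := mul_le_mul_of_nonneg_right hδ (norm_nonneg v)
    rw [h2, h3] at h1
    rw [hr, div_mul_eq_mul_div, le_div_iff₀ hc]
    nlinarith
  -- Step 2
  have step2 : ∀ v ∈ LinearMap.ker (T₁ : H →ₗ[ℝ] H), ‖v‖ ≤ 2 * ‖P₀ v‖ := by
    intro v hv
    have h1 := kerProjection_pyth T₀ v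
    have h2 := step1 v hv
    have h3 : ‖v - P₀ v‖ ≤ (1 / 2) * ‖v‖ := by
      calc ‖v - P₀ v‖ ≤ r * ‖v‖ := h2
        _ ≤ (1 / 2) * ‖v‖ := mul_le_mul_of_nonneg_right hr2 (norm_nonneg v)
    nlinarith [norm_nonneg v, norm_nonneg (P₀ v), norm_nonneg (v - P₀ v)]
  -- Step 3 : surjectivity of the projection between kernels
  have step3 : ∀ u ∈ LinearMap.ker (T₀ : H →ₗ[ℝ] H), ∃ v ∈ LinearMap.ker (T₁ : H →ₗ[ℝ] H), P₀ v = u := by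
    set φ : (LinearMap.ker (T₁ : H →ₗ[ℝ] H)) →ₗ[ℝ] (LinearMap.ker (T₀ : H →ₗ[ℝ] H)) :=
      (((LinearMap.ker (T₀ : H →ₗ[ℝ] H)).orthogonalProjectionOnto).comp
        ((LinearMap.ker (T₁ : H →ₗ[ℝ] H)).subtypeL)).toLinearMap with hφ
    have hφcoe : ∀ v : LinearMap.ker (T₁ : H →ₗ[ℝ] H), ((φ v : LinearMap.ker (T₀ : H →ₗ[ℝ] H)) : H) = P₀ (v : H) := by
      intro v
      rw [hP₀, kerProjection_apply]
      rfl
    have hφinj : Function.Injective φ := by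
      rw [injective_iff_map_eq_zero]
      intro v hv
      have h1 : P₀ (v : H) = 0 := by
        rw [← hφcoe, hv]
        rfl
      have h2 := step2 (v : H) v.2
      rw [h1, norm_zero, mul_zero] at h2
      exact Subtype.ext (norm_le_zero_iff.mp h2)
    have hφsurj : Function.Surjective φ :=
      (LinearMap.injective_iff_surjective_of_finrank_eq_finrank hrk).mp hφinj
    intro u hu
    obtain ⟨v, hv⟩ := hφsurj ⟨u, hu⟩
    exact ⟨(v : H), v.2, by rw [← hφcoe, hv]⟩
  -- Step 4
  have step4 : ∀ u ∈ LinearMap.ker (T₀ : H →ₗ[ℝ] H), ‖u - P₁ u‖ ≤ 2 * r * ‖u‖ := by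
    intro u hu
    obtain ⟨v, hv1, hv2⟩ := step3 u hu
    have h2v : ‖v‖ ≤ 2 * ‖u‖ := by
      rw [← hv2]
      exact step2 v hv1
    -- minimality of the orthogonal projection
    have hmin : ‖u - P₁ u‖ ≤ ‖u - v‖ := by
      have ha : u - P₁ u ∈ (LinearMap.ker (T₁ : H →ₗ[ℝ] H))ᗮ := kerProjection_sub_mem T₁ u
      have hb : P₁ u - v ∈ LinearMap.ker (T₁ : H →ₗ[ℝ] H) :=
        Submodule.sub_mem _ (kerProjection_mem T₁ u) hv1
      have hab : ⟪P₁ u - v, u - P₁ u⟫ = 0 :=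
        Submodule.inner_right_of_mem_orthogonal hb ha
      have h1 := norm_add_sq_real (P₁ u - v) (u - P₁ u)
      rw [hab] at h1
      have h2 : P₁ u - v + (u - P₁ u) = u - v := by abel
      rw [h2] at h1
      nlinarith [norm_nonneg (u - P₁ u), norm_nonneg (u - v), norm_nonneg (P₁ u - v),
        sq_nonneg ‖P₁ u - v‖]
    have h3 : ‖u - v‖ = ‖v - P₀ v‖ := by
      rw [← hv2, norm_sub_rev]
    calc ‖u - P₁ u‖ ≤ ‖u - v‖ := hmin
      _ = ‖v - P₀ v‖ := h3
      _ ≤ r * ‖v‖ := step1 v hv1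
      _ ≤ r * (2 * ‖u‖) := mul_le_mul_of_nonneg_left h2v hr0
      _ = 2 * r * ‖u‖ := by ring
  -- operator norm bounds
  have hbound1 : ‖(1 - P₁) * P₀‖ ≤ 2 * r := by
    apply ContinuousLinearMap.opNorm_le_bound _ (by positivity)
    intro u
    have h1 : ((1 - P₁) * P₀) u = P₀ u - P₁ (P₀ u) := by
      simp [ContinuousLinearMap.mul_apply, ContinuousLinearMap.sub_apply]
    rw [h1]
    calc ‖P₀ u - P₁ (P₀ u)‖ ≤ 2 * r * ‖P₀ u‖ := step4 _ (kerProjection_mem T₀ u)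
      _ ≤ 2 * r * ‖u‖ :=
        mul_le_mul_of_nonneg_left (kerProjection_norm_le T₀ u) (by positivity)
  have hbound2 : ‖(1 - P₀) * P₁‖ ≤ r := by
    apply ContinuousLinearMap.opNorm_le_bound _ hr0
    intro u
    have h1 : ((1 - P₀) * P₁) u = P₁ u - P₀ (P₁ u) := by
      simp [ContinuousLinearMap.mul_apply, ContinuousLinearMap.sub_apply]
    rw [h1]
    calc ‖P₁ u - P₀ (P₁ u)‖ ≤ r * ‖P₁ u‖ := step1 _ (kerProjection_mem T₁ u)
      _ ≤ r * ‖u‖ := mul_le_mul_of_nonneg_left (kerProjection_norm_le T₁ u) hr0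
  have hadj : star ((1 - P₀) * P₁) = P₁ * (1 - P₀) := by
    rw [star_mul]
    congr 1
    · rw [ContinuousLinearMap.star_eq_adjoint, kerProjection_adjoint]
    · rw [star_sub, star_one, ContinuousLinearMap.star_eq_adjoint, kerProjection_adjoint]
  have hbound3 : ‖P₁ * (1 - P₀)‖ ≤ r := by
    calc ‖P₁ * (1 - P₀)‖ = ‖star ((1 - P₀) * P₁)‖ := by rw [hadj]
      _ = ‖(1 - P₀) * P₁‖ := norm_star ((1 - P₀) * P₁)
      _ ≤ r := hbound2
  have hid : P₁ - P₀ = P₁ * (1 - P₀) - (1 - P₁) * P₀ := by noncomm_ring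
  calc ‖P₁ - P₀‖ = ‖P₁ * (1 - P₀) - (1 - P₁) * P₀‖ := by rw [hid]
    _ ≤ ‖P₁ * (1 - P₀)‖ + ‖(1 - P₁) * P₀‖ := norm_sub_le _ _
    _ ≤ r + 2 * r := add_le_add hbound3 hbound1
    _ = 3 * (δ / c) := by rw [hr]; ring

lemma kerProjection_continuous {B : Type*} [TopologicalSpace B]
    (A : B → H →L[ℝ] H) (hA : Continuous A)
    (hskew : ∀ x, ContinuousLinearMap.adjoint (A x) = -(A x))
    (hfred : ∀ x, _root_.IsFredholm (A x))
    (hker : IsLocallyConstant fun x => Module.finrank ℝ (LinearMap.ker (A x : H →ₗ[ℝ] H))) :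
    Continuous fun x => kerProjection (A x) := by
  rw [continuous_iff_continuousAt]
  intro x₀
  haveI := (hfred x₀).1
  obtain ⟨c, hc, hlb⟩ := lower_bound (A x₀) (hskew x₀) (hfred x₀).2.1
  rw [ContinuousAt, Metric.tendsto_nhds]
  intro ε hε
  set δ := min (c / 2) (c * ε / 6) with hδdef
  have hδ0 : 0 < δ := lt_min (by positivity) (by positivity)
  have hev1 : ∀ᶠ x in nhds x₀, ‖A x - A x₀‖ < δ := by
    have h1 := Metric.tendsto_nhds.mp (hA.continuousAt (x := x₀)) δ hδ0
    filter_upwards [h1] with x hx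
    rwa [dist_eq_norm] at hx
  have hev2 := hker.eventually_eq x₀
  filter_upwards [hev1, hev2] with x hx1 hx2
  haveI := (hfred x).1
  rw [dist_eq_norm]
  have key := proj_dist (A x₀) (A x) hx2 hc hlb hx1.le (min_le_left _ _)
  have h3 : δ ≤ c * ε / 6 := min_le_right _ _
  have h4 : δ / c ≤ ε / 6 := by
    rw [div_le_iff₀ hc]
    calc δ ≤ c * ε / 6 := h3
      _ = ε / 6 * c := by ring
  calc ‖kerProjection (A x) - kerProjection (A x₀)‖ ≤ 3 * (δ / c) := key
    _ ≤ 3 * (ε / 6) := by linarith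
    _ = ε / 2 := by ring
    _ < ε := by linarith

end Stmt12Aux

/-- Let `A` be a norm-continuous family of skew-adjoint Fredholm operators
on a real Hilbert space with locally constant kernel dimension, `p x` the orthogonal
projection onto `ker (A x)`, and `J` a norm-continuous family of skew-adjoint operators,
commuting with `p x`, which restrict to complex structures on `ker (A x)`.  Then for every
real `t ≠ 0` each operator `A x + t • (J x * p x)` is invertible and skew-adjoint, and the
straight-line homotopy `(s, x) ↦ A x + (s * t) • (J x * p x)` is a homotopy through
skew-adjoint Fredholm operators from `A` to a family of invertible operators. -/
theorem stmt12 {H : Type*} [NormedAddCommGroup H] [InnerProductSpace ℝ H] [CompleteSpace H]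
    {B : Type*} [TopologicalSpace B]
    (A : B → H →L[ℝ] H) (hA : Continuous A)
    (hskew : ∀ x, ContinuousLinearMap.adjoint (A x) = -(A x))
    (hfred : ∀ x, _root_.IsFredholm (A x))
    (hker : IsLocallyConstant fun x => Module.finrank ℝ (LinearMap.ker (A x : H →ₗ[ℝ] H)))
    (J : B → H →L[ℝ] H) (hJ : Continuous J)
    (hJskew : ∀ x, ContinuousLinearMap.adjoint (J x) = -(J x))
    (hJcomm : ∀ x, Commute (J x) (kerProjection (A x)))
    (hJsq : ∀ x, ∀ u ∈ LinearMap.ker (A x : H →ₗ[ℝ] H), J x (J x u) = -u)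
    (t : ℝ) (ht : t ≠ 0) :
    (∀ x, ContinuousLinearMap.adjoint (A x + t • (J x * kerProjection (A x)))
            = -(A x + t • (J x * kerProjection (A x))) ∧
          IsUnit (A x + t • (J x * kerProjection (A x)))) ∧
    Continuous (fun q : ℝ × B =>
      A q.2 + (q.1 * t) • (J q.2 * kerProjection (A q.2))) ∧
    (∀ s ∈ Set.Icc (0 : ℝ) 1, ∀ x,
      ContinuousLinearMap.adjoint (A x + (s * t) • (J x * kerProjection (A x)))
          = -(A x + (s * t) • (J x * kerProjection (A x))) ∧
      _root_.IsFredholm (A x + (s * t) • (J x * kerProjection (A x)))) := by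
  have fin : ∀ x, FiniteDimensional ℝ (LinearMap.ker (A x : H →ₗ[ℝ] H)) := fun x => (hfred x).1
  refine ⟨?_, ?_, ?_⟩
  · intro x
    haveI := fin x
    exact ⟨skew_sum (A x) (J x) (hskew x) (hJskew x) (hJcomm x) t,
      sum_isUnit (A x) (J x) (hskew x) (hfred x).2.1 (hJcomm x) (hJsq x) t ht⟩
  · have hP : Continuous fun x => kerProjection (A x) :=
      kerProjection_continuous A hA hskew hfred hker
    exact Continuous.add (hA.comp continuous_snd)
      (Continuous.smul (continuous_fst.mul continuous_const)
        ((hJ.comp continuous_snd).mul (hP.comp continuous_snd)))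
  · intro s _ x
    haveI := fin x
    exact ⟨skew_sum (A x) (J x) (hskew x) (hJskew x) (hJcomm x) (s * t),
      sum_fredholm (A x) (J x) (hskew x) (hfred x) (hJcomm x) (hJsq x) (s * t)⟩
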